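/- Let a, b ≥ -1/2 with 0 < |a - b| ≤ 1. Then there exists a constant C, depending only on a and b, such that for every integer k ≥ 10 and all 0 < y < x, the quantity I₁ = ((a+b)/2 + k)(2a + 2k + 3) x^{b+k-1/2} y^{a+k+1/2} ∫_0^1 s^{(a-b)/2} (1-s)^{(a+b)/2+k-1} / (x² - y² s)^{(a+b)/2+k+1} ds satisfies I₁ ≤ C / (x - y)². -/

import Mathlib

open MeasureTheory Real

open Set

lemma exp_neg_le_rpow {u : ℝ} (hu : 0 < u) : Real.exp (-u) ≤ u ^ (-(1/4) : ℝ) := by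
  rw [Real.exp_neg, Real.rpow_neg hu.le]
  apply inv_anti₀ (by positivity)
  calc u ^ ((1:ℝ)/4) ≤ max 1 u := by
        rcases le_total u 1 with h | h
        · exact le_max_of_le_left (Real.rpow_le_one hu.le h (by norm_num))
        · refine le_max_of_le_right ?_
          calc u ^ ((1:ℝ)/4) ≤ u ^ (1:ℝ) := Real.rpow_le_rpow_of_exponent_le h (by norm_num)
          _ = u := Real.rpow_one u
    _ ≤ Real.exp u := by
        rcases max_cases 1 u with ⟨h1, _⟩ | ⟨h1, _⟩ <;> rw [h1]
        · exact Real.one_le_exp hu.le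
        · linarith [Real.add_one_le_exp u]

lemma rpow_exp_bound {u : ℝ} (hu : 0 < u) : u ^ ((7:ℝ)/4) * Real.exp (-u) ≤ 5 := by
  have h1 : u ^ ((7:ℝ)/4) ≤ 1 + u^2 := by
    rcases le_total u 1 with h | h
    · have := Real.rpow_le_one hu.le h (by norm_num : (0:ℝ) ≤ 7/4)
      nlinarith [sq_nonneg u]
    · calc u ^ ((7:ℝ)/4) ≤ u ^ (2:ℝ) := Real.rpow_le_rpow_of_exponent_le h (by norm_num)
        _ = u ^ 2 := by rw [Real.rpow_two]
        _ ≤ 1 + u^2 := by linarith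
  have h2 : 1 + u^2 ≤ 5 * Real.exp u := by
    have h3 := Real.add_one_le_exp (u/2)
    have h4 : Real.exp u = Real.exp (u/2) ^ 2 := by
      rw [← Real.exp_nat_mul]; ring_nf
    nlinarith [Real.exp_pos u, Real.exp_pos (u/2), sq_nonneg (u - 2)]
  calc u ^ ((7:ℝ)/4) * Real.exp (-u) ≤ (1 + u^2) * Real.exp (-u) := by
        apply mul_le_mul_of_nonneg_right h1 (Real.exp_pos _).le
    _ ≤ 5 * Real.exp u * Real.exp (-u) := by
        apply mul_le_mul_of_nonneg_right h2 (Real.exp_pos _).le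
    _ = 5 := by rw [mul_assoc, ← Real.exp_add]; simp

lemma f2_continuousOn {p x y : ℝ} (hp : 2 ≤ p) (hy : 0 < y) (hxy : y < x) :
    ContinuousOn (fun s : ℝ => (1 - s) ^ (p-1) / (x^2 - y^2*s) ^ (p+1)) (Icc 0 1) := by
  have hd : ∀ s ∈ Icc (0:ℝ) 1, 0 < x^2 - y^2*s := by
    intro s hs
    have h1 : y^2*s ≤ y^2 := by nlinarith [hs.1, hs.2, sq_nonneg y]
    nlinarith [hxy, hy]
  apply ContinuousOn.div
  · apply ContinuousOn.rpow_const
    · exact (continuous_const.sub continuous_id).continuousOn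
    · intro s _; right; linarith
  · apply ContinuousOn.rpow_const
    · exact (continuous_const.sub (continuous_const.mul continuous_id)).continuousOn
    · intro s hs; left; exact (hd s hs).ne'
  · intro s hs
    exact (Real.rpow_pos_of_pos (hd s hs) _).ne'

lemma f2_integral {p x y : ℝ} (hp : 2 ≤ p) (hy : 0 < y) (hxy : y < x) :
    ∫ s in Ioo (0:ℝ) 1, (1 - s) ^ (p-1) / (x^2 - y^2*s) ^ (p+1)
      = (x^2) ^ (-p) / (p * (x^2 - y^2)) := by
  have hx : 0 < x := hy.trans hxy
  have hd : ∀ s ∈ Icc (0:ℝ) 1, 0 < x^2 - y^2*s := by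
    intro s hs
    have h1 : y^2*s ≤ y^2 := by nlinarith [hs.1, hs.2, sq_nonneg y]
    nlinarith [hxy, hy]
  have hD : 0 < x^2 - y^2 := by nlinarith
  have hp0 : 0 < p := by linarith
  set G : ℝ → ℝ := fun s => -((1-s)/(x^2-y^2*s)) ^ p / (p * (x^2-y^2)) with hG
  have hder : ∀ s ∈ Icc (0:ℝ) 1, HasDerivAt G ((1 - s) ^ (p-1) / (x^2 - y^2*s) ^ (p+1)) s := by
    intro s hs
    have hds := hd s hs
    have h1s : (0:ℝ) ≤ 1 - s := by linarith [hs.2]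
    have hinner : HasDerivAt (fun s : ℝ => (1-s)/(x^2-y^2*s))
        ((y^2 - x^2) / (x^2-y^2*s)^2) s := by
      have := (((hasDerivAt_id s).const_sub 1).div
        (((hasDerivAt_id s).const_mul (y^2)).const_sub (x^2)) hds.ne')
      refine this.congr_deriv ?_
      simp only [id]
      ring
    have hpow := hinner.rpow_const (p := p) (Or.inr (by linarith))
    have : HasDerivAt G
        (-((y^2 - x^2) / (x^2-y^2*s)^2 * p * ((1-s)/(x^2-y^2*s)) ^ (p-1)) / (p * (x^2-y^2))) s := by
      exact (hpow.neg).div_const _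
    convert this using 1
    rw [Real.div_rpow h1s hds.le]
    have hsplit : (x^2 - y^2*s) ^ (p+1) = (x^2 - y^2*s) ^ (p-1) * (x^2 - y^2*s)^2 := by
      rw [show ((x^2 - y^2*s))^(2:ℕ) = (x^2 - y^2*s)^((2:ℝ)) from (Real.rpow_natCast _ 2).symm,
        ← Real.rpow_add hds]
      congr 1
      ring
    rw [hsplit]
    have h1 : (x^2 - y^2*s) ^ (p-1) ≠ 0 := (Real.rpow_pos_of_pos hds _).ne'
    field_simp
    ring
  have hint : IntervalIntegrable (fun s : ℝ => (1 - s) ^ (p-1) / (x^2 - y^2*s) ^ (p+1)) volume 0 1 := by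
    apply ContinuousOn.intervalIntegrable
    rw [uIcc_of_le (by norm_num)]
    exact f2_continuousOn hp hy hxy
  have key : ∫ s in (0:ℝ)..1, (1 - s) ^ (p-1) / (x^2 - y^2*s) ^ (p+1) = G 1 - G 0 := by
    apply intervalIntegral.integral_eq_sub_of_hasDerivAt
    · intro s hs
      rw [uIcc_of_le (by norm_num)] at hs
      exact hder s hs
    · exact hint
  rw [← integral_Ioc_eq_integral_Ioo, ← intervalIntegral.integral_of_le (by norm_num), key, hG]
  simp only
  rw [show (1:ℝ) - 1 = 0 by ring, zero_div, Real.zero_rpow hp0.ne']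
  rw [show x^2 - y^2*(0:ℝ) = x^2 by ring, show (1:ℝ) - 0 = 1 by ring]
  rw [Real.div_rpow zero_le_one (by positivity), Real.one_rpow, Real.rpow_neg (by positivity)]
  have h2 : ((x:ℝ)^2) ^ p ≠ 0 := (Real.rpow_pos_of_pos (by positivity) _).ne'
  field_simp
  ring

lemma pointwise_bound {p x y α : ℝ} (hp : 2 ≤ p) (hy : 0 < y) (hxy : y < x)
    (hα1 : -(1/2) ≤ α) {s : ℝ} (hs : s ∈ Ioo (0:ℝ) 1) :
    s ^ α * (1 - s) ^ (p-1) / (x^2 - y^2*s) ^ (p+1)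
      ≤ 4 * (x^2)^(-(p+1)) * ((p-1)*((x^2-y^2)/x^2)) ^ (-(1/4):ℝ) * s ^ (-(3/4):ℝ)
        + 2 * ((1 - s) ^ (p-1) / (x^2 - y^2*s) ^ (p+1)) := by
  obtain ⟨hs0, hs1⟩ := hs
  have hx : 0 < x := hy.trans hxy
  have hx2 : 0 < x^2 := by positivity
  have h1s : 0 < 1 - s := by linarith
  have hd : 0 < x^2 - y^2*s := by nlinarith
  have hD : 0 < x^2 - y^2 := by nlinarith
  have hp1 : 0 < p - 1 := by linarith
  set c : ℝ := (x^2-y^2)/x^2 with hc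
  have hc0 : 0 < c := by positivity
  have hpc : 0 < (p-1)*c := mul_pos hp1 hc0
  have hsα : s ^ α ≤ s ^ (-(1/2) : ℝ) :=
    Real.rpow_le_rpow_of_exponent_ge hs0 hs1.le hα1
  have hfrac_nonneg : 0 ≤ (1 - s) ^ (p-1) / (x^2 - y^2*s) ^ (p+1) := by
    apply div_nonneg (Real.rpow_nonneg h1s.le _) (Real.rpow_nonneg hd.le _)
  have hg1_nonneg : 0 ≤ 4 * (x^2)^(-(p+1)) * ((p-1)*c) ^ (-(1/4):ℝ) * s ^ (-(3/4):ℝ) := by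
    apply mul_nonneg (mul_nonneg (mul_nonneg (by norm_num) (Real.rpow_nonneg hx2.le _))
      (Real.rpow_nonneg hpc.le _)) (Real.rpow_nonneg hs0.le _)
  rcases le_or_gt (1/2 : ℝ) s with hhalf | hhalf
  · -- s ≥ 1/2 : use the second term
    have h2 : s ^ (-(1/2) : ℝ) ≤ 2 := by
      have e1 : ((1:ℝ)/2) ≤ s ^ ((1/2):ℝ) := by
        calc ((1:ℝ)/2) = (1/2 : ℝ) ^ (1:ℝ) := by norm_num
          _ ≤ (1/2 : ℝ) ^ ((1/2):ℝ) :=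
              Real.rpow_le_rpow_of_exponent_ge (by norm_num) (by norm_num) (by norm_num)
          _ ≤ s ^ ((1/2):ℝ) := Real.rpow_le_rpow (by norm_num) hhalf (by norm_num)
      rw [Real.rpow_neg hs0.le]
      rw [inv_le_comm₀ (by positivity) (by norm_num)]
      linarith
    have : s ^ α * (1 - s) ^ (p-1) / (x^2 - y^2*s) ^ (p+1)
        ≤ 2 * ((1 - s) ^ (p-1) / (x^2 - y^2*s) ^ (p+1)) := by
      rw [mul_div_assoc]
      exact mul_le_mul_of_nonneg_right (hsα.trans h2) hfrac_nonneg
    exact this.trans (le_add_of_nonneg_left hg1_nonneg)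
  · -- s < 1/2 : use the first term
    have hd2 : x^2/2 < x^2 - y^2*s := by nlinarith
    have e1 : 1 - s ≤ Real.exp (-(c*s)) * ((x^2 - y^2*s) / x^2) := by
      have h1 : 1 - c*s ≤ Real.exp (-(c*s)) := by
        have := Real.add_one_le_exp (-(c*s)); linarith
      have h2 : 1 - s ≤ (1 - c*s) * ((x^2 - y^2*s) / x^2) := by
        have heq : (1 - c*s) * ((x^2 - y^2*s) / x^2)
            = ((x^2 - (x^2-y^2)*s) * (x^2 - y^2*s)) / (x^2*x^2) := by
          rw [hc]; field_simp
        rw [heq, le_div_iff₀ (by positivity)]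
        nlinarith [mul_nonneg (mul_nonneg hD.le (sq_nonneg y)) (sq_nonneg s)]
      calc 1 - s ≤ (1 - c*s) * ((x^2 - y^2*s) / x^2) := h2
        _ ≤ Real.exp (-(c*s)) * ((x^2 - y^2*s) / x^2) :=
            mul_le_mul_of_nonneg_right h1 (by positivity)
    have e2 : (1-s) ^ (p-1) ≤ Real.exp (-(c*s)) ^ (p-1) * ((x^2 - y^2*s) / x^2) ^ (p-1) := by
      rw [← Real.mul_rpow (Real.exp_pos _).le (by positivity)]
      exact Real.rpow_le_rpow h1s.le e1 (by linarith)
    have e3 : Real.exp (-(c*s)) ^ (p-1) = Real.exp (-((p-1)*(c*s))) := by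
      rw [← Real.exp_mul]; congr 1; ring
    have e4 : Real.exp (-((p-1)*(c*s))) ≤ ((p-1)*c) ^ (-(1/4):ℝ) * s ^ (-(1/4):ℝ) := by
      have hpos : 0 < (p-1)*(c*s) := by
        exact mul_pos hp1 (mul_pos hc0 hs0)
      calc Real.exp (-((p-1)*(c*s))) ≤ ((p-1)*(c*s)) ^ (-(1/4):ℝ) := exp_neg_le_rpow hpos
        _ = ((p-1)*c) ^ (-(1/4):ℝ) * s ^ (-(1/4):ℝ) := by
            rw [← Real.mul_rpow hpc.le hs0.le]; congr 1; ring
    have e5 : ((x^2 - y^2*s) / x^2) ^ (p-1) = (x^2 - y^2*s) ^ (p-1) / (x^2) ^ (p-1) :=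
      Real.div_rpow hd.le hx2.le _
    have hsplit : (x^2 - y^2*s) ^ (p+1) = (x^2 - y^2*s) ^ (p-1) * (x^2 - y^2*s)^2 := by
      rw [show ((x^2 - y^2*s))^(2:ℕ) = (x^2 - y^2*s)^((2:ℝ)) from (Real.rpow_natCast _ 2).symm,
        ← Real.rpow_add hd]
      congr 1; ring
    have expand : (x^2) ^ (p+1) = (x^2) ^ (p-1) * (x^2)^2 := by
      rw [show ((x:ℝ)^2)^(2:ℕ) = (x^2)^((2:ℝ)) from (Real.rpow_natCast _ 2).symm,
        ← Real.rpow_add hx2]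
      congr 1; ring
    have key : (1:ℝ) / (x^2) ^ (p-1) ≤ 4 * (x^2)^(-(p+1)) * (x^2 - y^2*s)^2 := by
      have h4 : (x^2)^2 ≤ 4 * (x^2-y^2*s)^2 := by nlinarith
      have hne : ((x:ℝ)^2) ^ (p-1) ≠ 0 := (Real.rpow_pos_of_pos hx2 _).ne'
      have hne2 : ((x:ℝ)^2) ^ (p+1) ≠ 0 := (Real.rpow_pos_of_pos hx2 _).ne'
      calc (1:ℝ) / (x^2) ^ (p-1) = (x^2)^2 * ((x^2)^(p+1))⁻¹ := by
            rw [expand]; field_simp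
        _ ≤ (4*(x^2-y^2*s)^2) * ((x^2)^(p+1))⁻¹ := by
            apply mul_le_mul_of_nonneg_right h4 (by positivity)
        _ = 4 * (x^2)^(-(p+1)) * (x^2-y^2*s)^2 := by
            rw [Real.rpow_neg hx2.le]; ring
    have num_bound : s ^ α * (1 - s) ^ (p-1)
        ≤ s ^ (-(1/2):ℝ) * (((p-1)*c) ^ (-(1/4):ℝ) * s ^ (-(1/4):ℝ)
            * ((x^2 - y^2*s) ^ (p-1) / (x^2) ^ (p-1))) := by
      apply mul_le_mul hsα _ (Real.rpow_nonneg h1s.le _) (Real.rpow_nonneg hs0.le _)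
      calc (1-s) ^ (p-1) ≤ Real.exp (-(c*s)) ^ (p-1) * ((x^2 - y^2*s) / x^2) ^ (p-1) := e2
        _ ≤ (((p-1)*c) ^ (-(1/4):ℝ) * s ^ (-(1/4):ℝ)) * ((x^2 - y^2*s) / x^2) ^ (p-1) := by
            apply mul_le_mul_of_nonneg_right _ (Real.rpow_nonneg (by positivity) _)
            rw [e3]; exact e4
        _ = ((p-1)*c) ^ (-(1/4):ℝ) * s ^ (-(1/4):ℝ) * ((x^2 - y^2*s) ^ (p-1) / (x^2) ^ (p-1)) := by
            rw [e5]
    have denom_pos : 0 < (x^2 - y^2*s) ^ (p+1) := Real.rpow_pos_of_pos hd _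
    have A_nonneg : 0 ≤ ((p-1)*c) ^ (-(1/4):ℝ) * s ^ (-(3/4):ℝ) :=
      mul_nonneg (Real.rpow_nonneg hpc.le _) (Real.rpow_nonneg hs0.le _)
    have M_nonneg : 0 ≤ (x^2 - y^2*s) ^ (p-1) := Real.rpow_nonneg hd.le _
    have main : s ^ α * (1 - s) ^ (p-1) / (x^2 - y^2*s) ^ (p+1)
        ≤ 4 * (x^2)^(-(p+1)) * ((p-1)*c) ^ (-(1/4):ℝ) * s ^ (-(3/4):ℝ) := by
      rw [div_le_iff₀ denom_pos]
      calc s ^ α * (1 - s) ^ (p-1)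
          ≤ s ^ (-(1/2):ℝ) * (((p-1)*c) ^ (-(1/4):ℝ) * s ^ (-(1/4):ℝ)
              * ((x^2 - y^2*s) ^ (p-1) / (x^2) ^ (p-1))) := num_bound
        _ = (((p-1)*c) ^ (-(1/4):ℝ) * (s ^ (-(1/2):ℝ) * s ^ (-(1/4):ℝ)))
              * (1 / (x^2) ^ (p-1)) * (x^2 - y^2*s) ^ (p-1) := by ring
        _ = (((p-1)*c) ^ (-(1/4):ℝ) * s ^ (-(3/4):ℝ))
              * (1 / (x^2) ^ (p-1)) * (x^2 - y^2*s) ^ (p-1) := by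
            rw [← Real.rpow_add hs0]; norm_num
        _ ≤ (((p-1)*c) ^ (-(1/4):ℝ) * s ^ (-(3/4):ℝ))
              * (4 * (x^2)^(-(p+1)) * (x^2 - y^2*s)^2) * (x^2 - y^2*s) ^ (p-1) := by
            exact mul_le_mul_of_nonneg_right (mul_le_mul_of_nonneg_left key A_nonneg) M_nonneg
        _ = 4 * (x^2)^(-(p+1)) * ((p-1)*c) ^ (-(1/4):ℝ) * s ^ (-(3/4):ℝ)
              * ((x^2 - y^2*s) ^ (p-1) * (x^2 - y^2*s)^2) := by ring
        _ = 4 * (x^2)^(-(p+1)) * ((p-1)*c) ^ (-(1/4):ℝ) * s ^ (-(3/4):ℝ)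
              * (x^2 - y^2*s) ^ (p+1) := by rw [← hsplit]
    exact main.trans (le_add_of_nonneg_right (by positivity))

lemma rpow_int_34 : ∫ s in Ioo (0:ℝ) 1, s ^ (-(3/4) : ℝ) = 4 := by
  rw [← integral_Ioc_eq_integral_Ioo, ← intervalIntegral.integral_of_le (by norm_num : (0:ℝ) ≤ 1)]
  rw [integral_rpow (Or.inl (by norm_num))]
  rw [Real.one_rpow, Real.zero_rpow (by norm_num)]
  norm_num

lemma g1_integrableOn : IntegrableOn (fun s : ℝ => s ^ (-(3/4) : ℝ)) (Ioo (0:ℝ) 1) := by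
  have := intervalIntegral.intervalIntegrable_rpow' (a := 0) (b := 1) (r := -(3/4))
    (by norm_num)
  rw [intervalIntegrable_iff_integrableOn_Ioc_of_le (by norm_num)] at this
  exact this.mono_set Ioo_subset_Ioc_self

lemma integral_bound {p x y α : ℝ} (hp : 2 ≤ p) (hy : 0 < y) (hxy : y < x)
    (hα1 : -(1/2) ≤ α) :
    ∫ s in Ioo (0:ℝ) 1, s ^ α * (1 - s) ^ (p-1) / (x^2 - y^2*s) ^ (p+1)
      ≤ 16 * (x^2)^(-(p+1)) * ((p-1)*((x^2-y^2)/x^2)) ^ (-(1/4):ℝ)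
        + 2 * ((x^2) ^ (-p) / (p * (x^2 - y^2))) := by
  have hx : 0 < x := hy.trans hxy
  set C1 : ℝ := 4 * (x^2)^(-(p+1)) * ((p-1)*((x^2-y^2)/x^2)) ^ (-(1/4):ℝ) with hC1
  set g : ℝ → ℝ := fun s => C1 * s ^ (-(3/4) : ℝ)
    + 2 * ((1 - s) ^ (p-1) / (x^2 - y^2*s) ^ (p+1)) with hg
  have hg1int : IntegrableOn (fun s : ℝ => C1 * s ^ (-(3/4) : ℝ)) (Ioo (0:ℝ) 1) :=
    g1_integrableOn.const_mul C1
  have hg2int : IntegrableOn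
      (fun s : ℝ => 2 * ((1 - s) ^ (p-1) / (x^2 - y^2*s) ^ (p+1))) (Ioo (0:ℝ) 1) := by
    have : IntervalIntegrable (fun s : ℝ => (1 - s) ^ (p-1) / (x^2 - y^2*s) ^ (p+1))
        volume 0 1 := by
      apply ContinuousOn.intervalIntegrable
      rw [uIcc_of_le (by norm_num)]
      exact f2_continuousOn hp hy hxy
    rw [intervalIntegrable_iff_integrableOn_Ioc_of_le (by norm_num)] at this
    exact (this.mono_set Ioo_subset_Ioc_self).const_mul 2
  have hgint : IntegrableOn g (Ioo (0:ℝ) 1) := hg1int.add hg2int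
  have hmono : ∫ s in Ioo (0:ℝ) 1, s ^ α * (1 - s) ^ (p-1) / (x^2 - y^2*s) ^ (p+1)
      ≤ ∫ s in Ioo (0:ℝ) 1, g s := by
    apply integral_mono_of_nonneg
    · filter_upwards [ae_restrict_mem measurableSet_Ioo] with s hs
      obtain ⟨hs0, hs1⟩ := hs
      have hd : (0:ℝ) ≤ x^2 - y^2*s := by nlinarith
      apply div_nonneg (mul_nonneg (Real.rpow_nonneg hs0.le _)
        (Real.rpow_nonneg (by linarith) _)) (Real.rpow_nonneg hd _)
    · exact hgint
    · filter_upwards [ae_restrict_mem measurableSet_Ioo] with s hs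
      exact pointwise_bound hp hy hxy hα1 hs
  refine hmono.trans ?_
  rw [hg, integral_add hg1int hg2int, integral_const_mul, integral_const_mul, rpow_int_34,
    f2_integral hp hy hxy, hC1]
  apply le_of_eq
  ring

set_option maxHeartbeats 2000000 in
/-- Uniform bound for the term `I₁` arising when differentiating in `x` the integral
representation of the Hankel transplantation kernel `K_{a+k}^{b+k}(x,y)` for `0 < y < x`:
`I₁ ≤ C / (x-y)²` with `C` independent of `k ≥ 10`. -/
theorem I1_bound (a b : ℝ) (ha : -1 / 2 ≤ a) (hb : -1 / 2 ≤ b)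
    (hab : 0 < |a - b|) (hab' : |a - b| ≤ 1) :
    ∃ C : ℝ, ∀ (k : ℕ), 10 ≤ k → ∀ x y : ℝ, 0 < y → y < x →
      ((a + b) / 2 + k) * (2 * a + 2 * k + 3) * x ^ (b + k - 1 / 2) * y ^ (a + k + 1 / 2) *
          (∫ s in Set.Ioo (0 : ℝ) 1,
            s ^ ((a - b) / 2) * (1 - s) ^ ((a + b) / 2 + k - 1) /
              (x ^ 2 - y ^ 2 * s) ^ ((a + b) / 2 + k + 1)) ≤
        C / (x - y) ^ 2 := by
  set K0 : ℝ := (1 + |a| + |b|) * (2*|a| + 5) with hK0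
  have hK0nn : 0 ≤ K0 := by positivity
  refine ⟨160 * K0 + 2 * (2*|a| + 5), ?_⟩
  intro k hk x y hy hxy
  have hx : 0 < x := hy.trans hxy
  have hx2 : (0:ℝ) < x^2 := by positivity
  have hk10 : (10:ℝ) ≤ (k:ℝ) := by exact_mod_cast hk
  have habs := abs_le.1 hab'
  set p : ℝ := (a + b) / 2 + (k:ℝ) with hpdef
  have hp2 : (2:ℝ) ≤ p := by rw [hpdef]; linarith
  have hp0 : (0:ℝ) < p := by linarith
  have hα1 : -(1/2) ≤ (a - b)/2 := by linarith [habs.1]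
  have hD : (0:ℝ) < x^2 - y^2 := by nlinarith
  -- the integral bound
  have hJ := integral_bound (p := p) (x := x) (y := y) (α := (a-b)/2) hp2 hy hxy hα1
  -- abbreviations
  set t : ℝ := (x - y)/x with htdef
  have ht0 : 0 < t := div_pos (by linarith) hx
  have ht1 : t < 1 := by rw [htdef, div_lt_one hx]; linarith
  set u : ℝ := (k:ℝ) * t with hudef
  have hu0 : 0 < u := by positivity
  have hyx0 : 0 < y/x := by positivity
  have hyx1 : y/x < 1 := by rw [div_lt_one hx]; exact hxy
  have hyxt : y/x = 1 - t := by rw [htdef]; field_simp; ring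
  -- bound on the ratio power
  have h_yx : (y/x) ^ (a + (k:ℝ) + 1/2) ≤ Real.exp (-u) := by
    calc (y/x) ^ (a + (k:ℝ) + 1/2) ≤ (y/x) ^ ((k:ℝ)) :=
          Real.rpow_le_rpow_of_exponent_ge hyx0 hyx1.le (by linarith)
      _ = (y/x) ^ k := Real.rpow_natCast _ k
      _ ≤ Real.exp (-t) ^ k := by
          apply pow_le_pow_left₀ hyx0.le
          rw [hyxt]
          linarith [Real.add_one_le_exp (-t)]
      _ = Real.exp (-u) := by
          rw [← Real.exp_nat_mul]; congr 1; rw [hudef]; ring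
  -- bound on the lambda power
  have h_lam : ((p-1)*((x^2-y^2)/x^2)) ^ (-(1/4):ℝ) ≤ 2 * u ^ (-(1/4):ℝ) := by
    have hc_t : t ≤ (x^2-y^2)/x^2 := by
      rw [htdef, div_le_div_iff₀ hx hx2]
      nlinarith [mul_nonneg (mul_nonneg (sub_nonneg.2 hxy.le) hx.le) hy.le]
    have hp1k : (k:ℝ)/2 ≤ p - 1 := by rw [hpdef]; linarith
    have hul : u/2 ≤ (p-1)*((x^2-y^2)/x^2) := by
      rw [hudef]
      calc (k:ℝ)*t/2 = ((k:ℝ)/2) * t := by ring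
        _ ≤ (p-1)*((x^2-y^2)/x^2) := by
            apply mul_le_mul hp1k hc_t ht0.le (by linarith)
    calc ((p-1)*((x^2-y^2)/x^2)) ^ (-(1/4):ℝ) ≤ (u/2) ^ (-(1/4):ℝ) :=
          Real.rpow_le_rpow_of_nonpos (by positivity) hul (by norm_num)
      _ = u ^ (-(1/4):ℝ) * ((1:ℝ)/2) ^ (-(1/4):ℝ) := by
          rw [← Real.mul_rpow hu0.le (by norm_num)]; congr 1; ring
      _ ≤ u ^ (-(1/4):ℝ) * 2 := by
          apply mul_le_mul_of_nonneg_left _ (Real.rpow_nonneg hu0.le _)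
          rw [show ((1:ℝ)/2) = 2⁻¹ by norm_num, Real.inv_rpow (by norm_num),
            ← Real.rpow_neg (by norm_num), neg_neg]
          calc (2:ℝ) ^ ((1/4):ℝ) ≤ (2:ℝ) ^ ((1:ℝ)) :=
                Real.rpow_le_rpow_of_exponent_le (by norm_num) (by norm_num)
            _ = 2 := Real.rpow_one 2
      _ = 2 * u ^ (-(1/4):ℝ) := by ring
  -- prefactor identity
  have id1 : x ^ (b + (k:ℝ) - 1/2) * y ^ (a + (k:ℝ) + 1/2)
      = (x^2) ^ p * (y/x) ^ (a + (k:ℝ) + 1/2) := by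
    have hy_eq : y = x * (y/x) := by field_simp
    calc x ^ (b + (k:ℝ) - 1/2) * y ^ (a + (k:ℝ) + 1/2)
        = x ^ (b + (k:ℝ) - 1/2) * (x * (y/x)) ^ (a + (k:ℝ) + 1/2) := by rw [← hy_eq]
      _ = x ^ (b + (k:ℝ) - 1/2) * (x ^ (a + (k:ℝ) + 1/2) * (y/x) ^ (a + (k:ℝ) + 1/2)) := by
          rw [Real.mul_rpow hx.le hyx0.le]
      _ = (x ^ (b + (k:ℝ) - 1/2) * x ^ (a + (k:ℝ) + 1/2)) * (y/x) ^ (a + (k:ℝ) + 1/2) := by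
          ring
      _ = x ^ (2*p) * (y/x) ^ (a + (k:ℝ) + 1/2) := by
          rw [← Real.rpow_add hx]; congr 2; rw [hpdef]; ring
      _ = (x^2) ^ p * (y/x) ^ (a + (k:ℝ) + 1/2) := by
          rw [← Real.rpow_natCast x 2, ← Real.rpow_mul hx.le]
          norm_num
  have id2 : (x^2) ^ p * (x^2) ^ (-(p+1)) = (x^2)⁻¹ := by
    rw [← Real.rpow_add hx2, show p + -(p+1) = -1 by ring, Real.rpow_neg_one]
  have id3 : (x^2) ^ p * (x^2) ^ (-p) = 1 := by
    rw [← Real.rpow_add hx2, show p + -p = 0 by ring, Real.rpow_zero]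
  -- nonnegativity of prefactor
  have hpre : (0:ℝ) ≤ p * (2*a + 2*(k:ℝ) + 3) * x ^ (b + (k:ℝ) - 1/2) * y ^ (a + (k:ℝ) + 1/2) := by
    apply mul_nonneg (mul_nonneg (mul_nonneg hp0.le (by linarith)) (Real.rpow_nonneg hx.le _))
      (Real.rpow_nonneg hy.le _)
  have step1 : ((a + b) / 2 + (k:ℝ)) * (2 * a + 2 * (k:ℝ) + 3) * x ^ (b + (k:ℝ) - 1 / 2)
        * y ^ (a + (k:ℝ) + 1 / 2) *
        (∫ s in Set.Ioo (0 : ℝ) 1,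
          s ^ ((a - b) / 2) * (1 - s) ^ ((a + b) / 2 + (k:ℝ) - 1) /
            (x ^ 2 - y ^ 2 * s) ^ ((a + b) / 2 + (k:ℝ) + 1))
      ≤ p * (2*a + 2*(k:ℝ) + 3) * x ^ (b + (k:ℝ) - 1/2) * y ^ (a + (k:ℝ) + 1/2) *
        (16 * (x^2)^(-(p+1)) * ((p-1)*((x^2-y^2)/x^2)) ^ (-(1/4):ℝ)
          + 2 * ((x^2) ^ (-p) / (p * (x^2 - y^2)))) := by
    exact mul_le_mul_of_nonneg_left hJ hpre
  refine step1.trans ?_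
  clear step1 hJ
  rw [mul_add]
  set G : ℝ := 2*a + 2*(k:ℝ) + 3 with hGdef
  have hG0 : 0 ≤ G := by rw [hGdef]; linarith
  have hGle : G ≤ (2*|a| + 5) * (k:ℝ) := by
    rw [hGdef]
    have := mul_nonneg (abs_nonneg a) (by linarith : (0:ℝ) ≤ (k:ℝ) - 1)
    have := le_abs_self a
    linarith
  have hple : p ≤ (1 + |a| + |b|) * (k:ℝ) := by
    rw [hpdef]
    have := mul_nonneg (add_nonneg (abs_nonneg a) (abs_nonneg b)) (by linarith : (0:ℝ) ≤ (k:ℝ) - 1)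
    have := le_abs_self a
    have := le_abs_self b
    have := abs_nonneg a
    have := abs_nonneg b
    linarith
  set e : ℝ := a + (k:ℝ) + 1/2 with hedef
  set L : ℝ := ((p-1)*((x^2-y^2)/x^2)) ^ (-(1/4):ℝ) with hLdef
  have hL0 : 0 ≤ L :=
    Real.rpow_nonneg (mul_nonneg (by linarith : (0:ℝ) ≤ p - 1) (div_nonneg hD.le hx2.le)) _
  have hyxe0 : 0 ≤ (y/x) ^ e := Real.rpow_nonneg hyx0.le _
  have hxt : x * t = x - y := by rw [htdef, mul_comm, div_mul_cancel₀ _ hx.ne']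
  have hxyt : (x - y)^2 = x^2 * t^2 := by rw [← hxt]; ring
  have hu2 : ((k:ℝ))^2 * t^2 = u^2 := by rw [hudef]; ring
  have huid : u^2 * u^(-(1/4):ℝ) = u^((7:ℝ)/4) := by
    rw [← Real.rpow_natCast u 2, ← Real.rpow_add hu0]; norm_num
  -- Term A
  have EA : p * G * x ^ (b + (k:ℝ) - 1/2) * y ^ e * (16 * (x^2)^(-(p+1)) * L)
      = 16 * (p*G) * ((y/x)^e * L) * (x^2)⁻¹ := by
    calc p * G * x ^ (b + (k:ℝ) - 1/2) * y ^ e * (16 * (x^2)^(-(p+1)) * L)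
        = p * G * (x ^ (b + (k:ℝ) - 1/2) * y ^ e) * (16 * (x^2)^(-(p+1)) * L) := by ring
      _ = p * G * ((x^2) ^ p * (y/x) ^ e) * (16 * (x^2)^(-(p+1)) * L) := by rw [id1]
      _ = 16 * (p*G) * ((y/x)^e * L) * ((x^2)^p * (x^2)^(-(p+1))) := by ring
      _ = 16 * (p*G) * ((y/x)^e * L) * (x^2)⁻¹ := by rw [id2]
  have boundA : p * G * x ^ (b + (k:ℝ) - 1/2) * y ^ e * (16 * (x^2)^(-(p+1)) * L)
      ≤ 160 * K0 / (x - y)^2 := by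
    rw [EA, hxyt, mul_comm (x^2) (t^2), ← div_div, div_eq_mul_inv (160*K0/t^2)]
    apply mul_le_mul_of_nonneg_right _ (by positivity)
    rw [le_div_iff₀ (by positivity : (0:ℝ) < t^2)]
    have c1 : p * G ≤ K0 * (k:ℝ)^2 := by
      calc p * G ≤ ((1 + |a| + |b|) * (k:ℝ)) * ((2*|a| + 5) * (k:ℝ)) :=
            mul_le_mul hple hGle hG0 (by positivity)
        _ = K0 * (k:ℝ)^2 := by rw [hK0]; ring
    have c2 : (y/x)^e * L ≤ Real.exp (-u) * (2 * u^(-(1/4):ℝ)) :=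
      mul_le_mul h_yx h_lam hL0 (Real.exp_nonneg _)
    calc 16 * (p*G) * ((y/x)^e * L) * t^2
        ≤ 16 * (K0 * (k:ℝ)^2) * (Real.exp (-u) * (2 * u^(-(1/4):ℝ))) * t^2 := by
          apply mul_le_mul_of_nonneg_right _ (sq_nonneg t)
          apply mul_le_mul (mul_le_mul_of_nonneg_left c1 (by norm_num))
            c2 (mul_nonneg hyxe0 hL0) (by positivity)
      _ = 32 * K0 * (((k:ℝ)^2 * t^2) * (u^(-(1/4):ℝ) * Real.exp (-u))) := by ring
      _ = 32 * K0 * (u^2 * u^(-(1/4):ℝ) * Real.exp (-u)) := by rw [hu2]; ring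
      _ = 32 * K0 * (u^((7:ℝ)/4) * Real.exp (-u)) := by rw [huid]
      _ ≤ 32 * K0 * 5 := mul_le_mul_of_nonneg_left (rpow_exp_bound hu0) (by positivity)
      _ = 160 * K0 := by ring
  -- Term B
  have EB : p * G * x ^ (b + (k:ℝ) - 1/2) * y ^ e * (2 * ((x^2) ^ (-p) / (p * (x^2 - y^2))))
      = 2 * G * (y/x)^e / (x^2 - y^2) := by
    have hpfrac : p / (p * (x^2 - y^2)) = 1 / (x^2 - y^2) := by
      rw [div_mul_cancel_left₀ hp0.ne', one_div]
    calc p * G * x ^ (b + (k:ℝ) - 1/2) * y ^ e * (2 * ((x^2) ^ (-p) / (p * (x^2 - y^2))))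
        = p * G * (x ^ (b + (k:ℝ) - 1/2) * y ^ e) * (2 * ((x^2) ^ (-p) / (p * (x^2 - y^2)))) := by
          ring
      _ = p * G * ((x^2) ^ p * (y/x) ^ e) * (2 * ((x^2) ^ (-p) / (p * (x^2 - y^2)))) := by
          rw [id1]
      _ = 2 * G * (y/x)^e * ((x^2)^p * (x^2)^(-p)) * (p / (p * (x^2 - y^2))) := by ring
      _ = 2 * G * (y/x)^e * 1 * (1 / (x^2 - y^2)) := by rw [id3, hpfrac]
      _ = 2 * G * (y/x)^e / (x^2 - y^2) := by ring
  have hue : u * Real.exp (-u) ≤ 1 := by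
    rw [Real.exp_neg]
    rw [show u * (Real.exp u)⁻¹ = u / Real.exp u by ring, div_le_one (Real.exp_pos u)]
    linarith [Real.add_one_le_exp u]
  have boundB : p * G * x ^ (b + (k:ℝ) - 1/2) * y ^ e
        * (2 * ((x^2) ^ (-p) / (p * (x^2 - y^2))))
      ≤ 2 * (2*|a| + 5) / (x - y)^2 := by
    rw [EB, div_le_div_iff₀ hD (pow_pos (by linarith : (0:ℝ) < x - y) 2)]
    have key2 : (k:ℝ) * Real.exp (-u) * (x-y)^2 ≤ x^2 - y^2 := by
      have h1 : (k:ℝ) * (x - y) = u * x := by rw [hudef, ← hxt]; ring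
      calc (k:ℝ) * Real.exp (-u) * (x-y)^2
          = ((k:ℝ) * (x-y)) * Real.exp (-u) * (x-y) := by ring
        _ = (u * Real.exp (-u)) * (x * (x-y)) := by rw [h1]; ring
        _ ≤ 1 * (x * (x-y)) := by
            apply mul_le_mul_of_nonneg_right hue
              (mul_nonneg hx.le (by linarith : (0:ℝ) ≤ x - y))
        _ ≤ x^2 - y^2 := by
            have h2 := mul_nonneg hy.le (by linarith : (0:ℝ) ≤ x - y)
            linarith [h2]
    calc 2 * G * (y/x)^e * (x-y)^2
        ≤ 2 * ((2*|a| + 5) * (k:ℝ)) * Real.exp (-u) * (x-y)^2 := by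
          apply mul_le_mul_of_nonneg_right _ (sq_nonneg _)
          apply mul_le_mul (mul_le_mul_of_nonneg_left hGle (by norm_num)) h_yx
            hyxe0 (by positivity)
      _ = 2 * (2*|a| + 5) * ((k:ℝ) * Real.exp (-u) * (x-y)^2) := by ring
      _ ≤ 2 * (2*|a| + 5) * (x^2 - y^2) := by
          apply mul_le_mul_of_nonneg_left key2 (by positivity)
  calc p * G * x ^ (b + (k:ℝ) - 1/2) * y ^ e * (16 * (x^2)^(-(p+1)) * L)
        + p * G * x ^ (b + (k:ℝ) - 1/2) * y ^ e * (2 * ((x^2) ^ (-p) / (p * (x^2 - y^2))))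
      ≤ 160 * K0 / (x - y)^2 + 2 * (2*|a| + 5) / (x - y)^2 := add_le_add boundA boundB
    _ = (160 * K0 + 2 * (2*|a| + 5)) / (x - y)^2 := (add_div _ _ _).symm
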